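/- Let M be a normal topological space, ψ : M → M a homeomorphism, and ζ a monotone functional on continuous bounded real functions on M satisfying ζ(F ∘ ψ) = ζ(F) for all F. If X is heavy (ζ(H) ≥ inf_X H for all H) and Y is superheavy (ζ(H) ≤ sup_Y H for all H), with X, Y closed, then ψ(X) ∩ Y ≠ ∅. -/

import Mathlib

open BoundedContinuousFunction

/-- A heavy set is non-displaceable from a superheavy set: if `ζ` is monotone and
invariant under composition with a homeomorphism `ψ`, `X` is heavy and `Y` is
superheavy, then `ψ(X) ∩ Y ≠ ∅`. -/
theorem stmt_5 {M : Type*} [TopologicalSpace M] [NormalSpace M]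
    (ψ : M ≃ₜ M)
    (ζ : (M →ᵇ ℝ) → ℝ)
    (hmono : ∀ F G : M →ᵇ ℝ, (∀ x, F x ≤ G x) → ζ F ≤ ζ G)
    (hinv : ∀ F : M →ᵇ ℝ, ζ (F.compContinuous (ψ : C(M, M))) = ζ F)
    (X Y : Set M) (hX : IsClosed X) (hY : IsClosed Y)
    (hXne : X.Nonempty) (hYne : Y.Nonempty)
    (hheavy : ∀ H : M →ᵇ ℝ, sInf (⇑H '' X) ≤ ζ H)
    (hsuper : ∀ H : M →ᵇ ℝ, ζ H ≤ sSup (⇑H '' Y)) :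
    ((ψ '' X) ∩ Y).Nonempty := by
  by_contra h
  rw [Set.not_nonempty_iff_eq_empty] at h
  have hd : Disjoint Y (ψ '' X) := by
    rw [Set.disjoint_iff_inter_eq_empty, Set.inter_comm]; exact h
  have hψX : IsClosed (ψ '' X) := (Homeomorph.isClosedMap ψ) X hX
  obtain ⟨f, hf0, hf1, hf01⟩ := exists_bounded_zero_one_of_closed hY hψX hd
  -- f = 0 on Y, f = 1 on ψ(X)
  have himg : ⇑(f.compContinuous (ψ : C(M, M))) '' X = {1} := by
    apply Set.eq_singleton_iff_nonempty_unique_mem.mpr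
    constructor
    · exact (Set.image_nonempty.mpr hXne)
    · rintro y ⟨x, hx, rfl⟩
      exact hf1 ⟨x, hx, rfl⟩
  have h1 : (1 : ℝ) ≤ ζ f := by
    have := hheavy (f.compContinuous (ψ : C(M, M)))
    rw [himg, csInf_singleton, hinv] at this
    exact this
  have h2 : ζ f ≤ 0 := by
    have := hsuper f
    have himgY : ⇑f '' Y = {0} := by
      apply Set.eq_singleton_iff_nonempty_unique_mem.mpr
      exact ⟨Set.image_nonempty.mpr hYne, by rintro y ⟨x, hx, rfl⟩; exact hf0 hx⟩
    rw [himgY, csSup_singleton] at this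
    exact this
  linarith
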